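/- Let φ_n ∈ 𝓒 w-converge to φ ∈ 𝓒 and let ψ_n ∈ 𝓒 w-converge to ψ ∈ 𝓒, and suppose ⟨φ_n − φ, ψ_n − ψ⟩_n ≥ 0 for all n ∈ ℕ. Then liminf_{n→∞} ⟨φ_n, ψ_n⟩_n ≥ ⟨φ, ψ⟩. -/

import Mathlib

open MeasureTheory Filter Topology

noncomputable section

namespace Mosco

variable {E : Type*} [MeasurableSpace E]

/-- The inner product of two real-valued functions with respect to a measure,
`⟨φ, ψ⟩ = ∫ φ ψ dμ`. -/
def ip (μ : Measure E) (φ ψ : E → ℝ) : ℝ := ∫ x, φ x * ψ x ∂μ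

/-- The framework of Section 2.1: mutually singular probability measures `ν n`, `n : ℕ`
(`ν 0` playing the role of the limit measure `ν`), such that `L²(E, ν 0)` is separable,
together with disjoint sets `En n` carrying `ν n`, and a linear subset `F = 𝓕 ⊆ 𝓓`
which is dense in `L²(E, ν 0)`. -/
structure Frame (E : Type*) [MeasurableSpace E] where
  ν : ℕ → Measure E
  prob : ∀ n, IsProbabilityMeasure (ν n)
  singular : ∀ m n, m ≠ n → (ν m).MutuallySingular (ν n)
  separableL2 : TopologicalSpace.SeparableSpace (Lp ℝ 2 (ν 0))
  En : ℕ → Set E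
  measEn : ∀ n, MeasurableSet (En n)
  disjEn : ∀ m n, m ≠ n → Disjoint (En m) (En n)
  nullEn : ∀ n, ν n (En n)ᶜ = 0
  F : Set (E → ℝ)
  F_measurable : ∀ φ ∈ F, Measurable φ
  F_memL2 : ∀ φ ∈ F, ∀ n, MemLp φ 2 (ν n)
  F_tendsto : ∀ φ ∈ F, Tendsto (fun n => ip (ν n) φ φ) atTop (𝓝 (ip (ν 0) φ φ))
  F_linear : ∀ φ ∈ F, ∀ ψ ∈ F, ∀ a b : ℝ, (fun x => a * φ x + b * ψ x) ∈ F
  F_dense : ∀ f : E → ℝ, Measurable f → MemLp f 2 (ν 0) → ∀ ε : ℝ, 0 < ε →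
    ∃ φ ∈ F, ip (ν 0) (fun x => f x - φ x) (fun x => f x - φ x) < ε

/-- The set `𝓓`: everywhere defined measurable functions lying in every `L²(E, ν n)`
whose `ν n`-norms converge to the `ν 0`-norm. -/
def Frame.D (fr : Frame E) : Set (E → ℝ) :=
  {φ | Measurable φ ∧ (∀ n, MemLp φ 2 (fr.ν n)) ∧
    Tendsto (fun n => ip (fr.ν n) φ φ) atTop (𝓝 (ip (fr.ν 0) φ φ))}

/-- The set `𝓒`: elements of `𝓓` satisfying conditions (c1) and (c2). -/
def Frame.C (fr : Frame E) : Set (E → ℝ) :=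
  {φ | φ ∈ fr.D ∧ (∀ n, 1 ≤ n → ∃ g ∈ fr.F, φ =ᵐ[fr.ν n] g) ∧
    ∀ ψ ∈ fr.F, Tendsto (fun n => ip (fr.ν n) φ ψ) atTop (𝓝 (ip (fr.ν 0) φ ψ))}

/-- The set `𝓥` of multipliers mapping `𝓓` into `𝓓` and `𝓕` into `𝓕`. -/
def Frame.V (fr : Frame E) : Set (E → ℝ) :=
  {ψ | Measurable ψ ∧ (∀ n, MemLp ψ 2 (fr.ν n)) ∧
    (∀ σ ∈ fr.D, (fun x => σ x * ψ x) ∈ fr.D) ∧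
    (∀ τ ∈ fr.F, (fun x => τ x * ψ x) ∈ fr.F)}

/-- `w`-convergence of a sequence `φs` (with `φs n` regarded as an element of
`L²(E, ν n)`) to `φ ∈ L²(E, ν 0)`. -/
def Frame.WConv (fr : Frame E) (φs : ℕ → E → ℝ) (φ : E → ℝ) : Prop :=
  ∀ ψ ∈ fr.C, Tendsto (fun n => ip (fr.ν n) (φs n) ψ) atTop (𝓝 (ip (fr.ν 0) φ ψ))

/-- `s`-convergence: `w`-convergence together with convergence of the norms. -/
def Frame.SConv (fr : Frame E) (φs : ℕ → E → ℝ) (φ : E → ℝ) : Prop :=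
  fr.WConv φs φ ∧
  Tendsto (fun n => ip (fr.ν n) (φs n) (φs n)) atTop (𝓝 (ip (fr.ν 0) φ φ))


/-! ### Auxiliary lemmas about `ip` -/

lemma ip_comm (μ : Measure E) (f g : E → ℝ) : ip μ f g = ip μ g f := by
  simp [ip, mul_comm]

lemma ip_self_nonneg (μ : Measure E) (f : E → ℝ) : 0 ≤ ip μ f f :=
  integral_nonneg fun x => mul_self_nonneg _

lemma memLp_integrable_mul {μ : Measure E} {f g : E → ℝ}
    (hf : MemLp f 2 μ) (hg : MemLp g 2 μ) :
    Integrable (fun x => f x * g x) μ := by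
  have h := L2.integrable_inner (𝕜 := ℝ) (hf.toLp f) (hg.toLp g)
  refine h.congr ?_
  filter_upwards [hf.coeFn_toLp, hg.coeFn_toLp] with x hx hy
  simp [hx, hy, RCLike.inner_apply, mul_comm]

lemma ip_eq_inner {μ : Measure E} {f g : E → ℝ} (hf : MemLp f 2 μ) (hg : MemLp g 2 μ) :
    ip μ f g = @inner ℝ _ _ (hf.toLp f) (hg.toLp g) := by
  rw [L2.inner_def, ip]
  refine integral_congr_ae ?_
  filter_upwards [hf.coeFn_toLp, hg.coeFn_toLp] with x hx hy
  simp [hx, hy, RCLike.inner_apply, mul_comm]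

lemma abs_ip_le {μ : Measure E} {f g : E → ℝ} (hf : MemLp f 2 μ) (hg : MemLp g 2 μ) :
    |ip μ f g| ≤ Real.sqrt (ip μ f f) * Real.sqrt (ip μ g g) := by
  rw [ip_eq_inner hf hg, ip_eq_inner hf hf, ip_eq_inner hg hg,
    real_inner_self_eq_norm_mul_norm, real_inner_self_eq_norm_mul_norm,
    Real.sqrt_mul_self (norm_nonneg _), Real.sqrt_mul_self (norm_nonneg _)]
  exact abs_real_inner_le_norm _ _

lemma ip_sub_right {μ : Measure E} {f g g' : E → ℝ}
    (hf : MemLp f 2 μ) (hg : MemLp g 2 μ) (hg' : MemLp g' 2 μ) :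
    ip μ f (fun x => g x - g' x) = ip μ f g - ip μ f g' := by
  rw [ip, ip, ip, ← integral_sub (memLp_integrable_mul hf hg) (memLp_integrable_mul hf hg')]
  simp [mul_sub]

lemma ip_sub_sub {μ : Measure E} {f f' g g' : E → ℝ} (hf : MemLp f 2 μ) (hf' : MemLp f' 2 μ)
    (hg : MemLp g 2 μ) (hg' : MemLp g' 2 μ) :
    ip μ (fun x => f x - f' x) (fun x => g x - g' x)
      = ip μ f g - ip μ f g' - ip μ f' g + ip μ f' g' := by
  rw [ip_sub_right (f := fun x => f x - f' x) (hf.sub hf') hg hg']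
  have h1 : ip μ (fun x => f x - f' x) g = ip μ f g - ip μ f' g := by
    rw [ip_comm, ip_sub_right hg hf hf', ip_comm μ g f, ip_comm μ g f']
  have h2 : ip μ (fun x => f x - f' x) g' = ip μ f g' - ip μ f' g' := by
    rw [ip_comm, ip_sub_right hg' hf hf', ip_comm μ g' f, ip_comm μ g' f']
  rw [h1, h2]; ring

lemma ip_congr_left {μ : Measure E} {f f' g : E → ℝ} (h : f =ᵐ[μ] f') :
    ip μ f g = ip μ f' g := by
  refine integral_congr_ae ?_
  filter_upwards [h] with x hx
  rw [hx]

lemma ip_congr_right {μ : Measure E} {f g g' : E → ℝ} (h : g =ᵐ[μ] g') :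
    ip μ f g = ip μ f g' := by
  rw [ip_comm, ip_congr_left h, ip_comm]

/-- Polarization: for `φ, ψ ∈ 𝓒`, `⟨φ, ψ⟩ₙ → ⟨φ, ψ⟩`. -/
lemma Frame.C_ip_tendsto (fr : Frame E) {φ ψ : E → ℝ} (hφ : φ ∈ fr.C) (hψ : ψ ∈ fr.C) :
    Tendsto (fun n => ip (fr.ν n) φ ψ) atTop (𝓝 (ip (fr.ν 0) φ ψ)) := by
  obtain ⟨⟨hφm, hφL2, hφt⟩, -, hφc2⟩ := hφ
  obtain ⟨⟨hψm, hψL2, hψt⟩, -, hψc2⟩ := hψ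
  -- the norms of the differences `ψ - χ`, `χ ∈ F`, converge
  have hdiff : ∀ χ ∈ fr.F, Tendsto
      (fun n => ip (fr.ν n) (fun x => ψ x - χ x) (fun x => ψ x - χ x)) atTop
      (𝓝 (ip (fr.ν 0) (fun x => ψ x - χ x) (fun x => ψ x - χ x))) := by
    intro χ hχ
    have hχL2 := fr.F_memL2 χ hχ
    have hexp : ∀ n, ip (fr.ν n) (fun x => ψ x - χ x) (fun x => ψ x - χ x)
        = ip (fr.ν n) ψ ψ - 2 * ip (fr.ν n) ψ χ + ip (fr.ν n) χ χ := by
      intro n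
      rw [ip_sub_sub (hψL2 n) (hχL2 n) (hψL2 n) (hχL2 n), ip_comm (fr.ν n) χ ψ]; ring
    simp only [hexp]
    exact (hψt.sub ((hψc2 χ hχ).const_mul 2)).add (fr.F_tendsto χ hχ)
  -- a uniform bound on the norms of φ
  have hsq : Tendsto (fun n => Real.sqrt (ip (fr.ν n) φ φ)) atTop
      (𝓝 (Real.sqrt (ip (fr.ν 0) φ φ))) := hφt.sqrt
  obtain ⟨B, hBmem⟩ := hsq.bddAbove_range
  have hB : ∀ n, Real.sqrt (ip (fr.ν n) φ φ) ≤ B := fun n => hBmem ⟨n, rfl⟩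
  have hB0 : 0 ≤ B := le_trans (Real.sqrt_nonneg _) (hB 0)
  rw [Metric.tendsto_nhds]
  intro ε hε
  set δ := ε / (3 * (2 * B + 1)) with hδdef
  have hδ : 0 < δ := by positivity
  obtain ⟨χ, hχF, hχnear⟩ := fr.F_dense ψ hψm (hψL2 0) (δ ^ 2) (by positivity)
  have hχL2 := fr.F_memL2 χ hχF
  have h1 : ∀ᶠ n in atTop,
      ip (fr.ν n) (fun x => ψ x - χ x) (fun x => ψ x - χ x) < δ ^ 2 :=
    (hdiff χ hχF).eventually_lt_const hχnear
  have h2 : ∀ᶠ n in atTop, dist (ip (fr.ν n) φ χ) (ip (fr.ν 0) φ χ) < ε / 3 :=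
    Metric.tendsto_nhds.mp (hφc2 χ hχF) (ε / 3) (by positivity)
  filter_upwards [h1, h2] with n hn1 hn2
  rw [Real.dist_eq] at hn2 ⊢
  have e1 : ip (fr.ν n) φ ψ
      = ip (fr.ν n) φ (fun x => ψ x - χ x) + ip (fr.ν n) φ χ := by
    rw [ip_sub_right (hφL2 n) (hψL2 n) (hχL2 n)]; ring
  have e0 : ip (fr.ν 0) φ ψ
      = ip (fr.ν 0) φ (fun x => ψ x - χ x) + ip (fr.ν 0) φ χ := by
    rw [ip_sub_right (hφL2 0) (hψL2 0) (hχL2 0)]; ring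
  have bsqrt : ∀ m, ip (fr.ν m) (fun x => ψ x - χ x) (fun x => ψ x - χ x) < δ ^ 2 →
      |ip (fr.ν m) φ (fun x => ψ x - χ x)| ≤ B * δ := by
    intro m hm
    refine le_trans (abs_ip_le (hφL2 m)
      ((hψL2 m).sub (hχL2 m) : MemLp (fun x => ψ x - χ x) 2 (fr.ν m))) ?_
    refine mul_le_mul (hB m) ?_ (Real.sqrt_nonneg _) hB0
    calc Real.sqrt _ ≤ Real.sqrt (δ ^ 2) := Real.sqrt_le_sqrt hm.le
      _ = δ := Real.sqrt_sq hδ.le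
  have b1 := bsqrt n hn1
  have b0 := bsqrt 0 hχnear
  have key : ip (fr.ν n) φ ψ - ip (fr.ν 0) φ ψ
      = ip (fr.ν n) φ (fun x => ψ x - χ x) + -(ip (fr.ν 0) φ (fun x => ψ x - χ x))
        + (ip (fr.ν n) φ χ - ip (fr.ν 0) φ χ) := by
    rw [e1, e0]; ring
  rw [key]
  have habs := (abs_add_le (ip (fr.ν n) φ (fun x => ψ x - χ x)
      + -(ip (fr.ν 0) φ (fun x => ψ x - χ x))) (ip (fr.ν n) φ χ - ip (fr.ν 0) φ χ))
  have habs2 := abs_add_le (ip (fr.ν n) φ (fun x => ψ x - χ x))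
      (-(ip (fr.ν 0) φ (fun x => ψ x - χ x)))
  rw [abs_neg] at habs2
  have hfin : 3 * (2 * B + 1) * δ = ε := by
    rw [hδdef]; field_simp
  linarith

lemma ip_const_mul_left {μ : Measure E} (a : ℝ) (f g : E → ℝ) :
    ip μ (fun x => a * f x) g = a * ip μ f g := by
  rw [ip, ip, ← integral_const_mul]
  congr 1; funext x; ring

/-- A `w`-convergent sequence with terms in `𝓒` has uniformly bounded norms. -/
lemma Frame.bounded_of_wconv (fr : Frame E) (φs : ℕ → E → ℝ) {φ : E → ℝ}
    (hφs : ∀ n, φs n ∈ fr.C) (hw : fr.WConv φs φ) :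
    ∃ M : ℝ, ∀ n, ip (fr.ν n) (φs n) (φs n) ≤ M := by
  classical
  by_contra hcon
  push_neg at hcon
  set r : ℕ → ℝ := fun n => ip (fr.ν n) (φs n) (φs n) with hrdef
  -- extract a strictly monotone subsequence along which the norms blow up
  have step : ∀ N : ℕ, ∀ K : ℝ, ∃ n, N < n ∧ K < r n := by
    intro N K
    obtain ⟨n, hn⟩ := hcon (max K (((Finset.range (N + 1)).sup' (by simp) r)))
    refine ⟨n, ?_, lt_of_le_of_lt (le_max_left _ _) hn⟩
    by_contra h
    push_neg at h
    have hmem : n ∈ Finset.range (N + 1) := Finset.mem_range.mpr (Nat.lt_succ_of_le h)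
    have := Finset.le_sup' r hmem
    exact absurd hn (not_lt.2 (le_trans this (le_max_right _ _)))
  have hstep := fun N K => Classical.choose_spec (step N K)
  let ns : ℕ → ℕ := fun k => Nat.rec (Classical.choose (step 0 0)) 
    (fun k ih => Classical.choose (step ih (k + 1))) k
  have hns0 : 0 < ns 0 := (hstep 0 0).1
  have hnss : ∀ k, ns k < ns (k + 1) := fun k => (hstep (ns k) ((k : ℝ) + 1)).1
  have hmono : StrictMono ns := strictMono_nat_of_lt_succ hnss
  have hns1 : ∀ k, 1 ≤ ns k := by
    intro k
    calc 1 ≤ ns 0 := hns0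
    _ ≤ ns k := hmono.monotone (Nat.zero_le k)
  have hrk : ∀ k : ℕ, (k : ℝ) < r (ns k) := by
    intro k
    cases k with
    | zero => exact_mod_cast (hstep 0 0).2
    | succ k =>
      push_cast
      exact (hstep (ns k) ((k : ℝ) + 1)).2
  have hrpos : ∀ k, 0 < r (ns k) := fun k =>
    lt_of_le_of_lt (by exact_mod_cast Nat.zero_le k) (hrk k)
  set s : ℕ → ℝ := fun k => Real.sqrt (r (ns k)) with hsdef
  have hspos : ∀ k, 0 < s k := fun k => Real.sqrt_pos.mpr (hrpos k)
  have hs_sq : ∀ k, s k ^ 2 = r (ns k) := fun k => Real.sq_sqrt (hrpos k).le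
  have hs_ge : ∀ k : ℕ, Real.sqrt k ≤ s k := fun k => Real.sqrt_le_sqrt (hrk k).le
  have hs1 : ∀ k, 1 ≤ k → 1 ≤ s k := by
    intro k hk
    refine le_trans ?_ (hs_ge k)
    rw [Real.one_le_sqrt]
    · exact_mod_cast hk
  set c : ℕ → ℝ := fun k => 1 / (s k * Real.sqrt (s k)) with hcdef
  have hcpos : ∀ k, 0 < c k := fun k =>
    one_div_pos.mpr (mul_pos (hspos k) (Real.sqrt_pos.mpr (hspos k)))
  -- choose the `F`-representatives of `φs (ns k)` on `En (ns k)`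
  have hrep := fun k => (hφs (ns k)).2.1 (ns k) (hns1 k)
  choose g hgF hgae using hrep
  -- the adversarial test function
  set ψ : E → ℝ := fun x =>
    ∑' k, Set.indicator (fr.En (ns k)) (fun y => c k * g k y) x with hψdef
  have hterm_meas : ∀ k, Measurable
      (fun x => Set.indicator (fr.En (ns k)) (fun y => c k * g k y) x) := by
    intro k
    exact Measurable.indicator ((fr.F_measurable (g k) (hgF k)).const_mul (c k))
      (fr.measEn (ns k))
  -- pointwise description of ψ
  have hψ_on : ∀ k, ∀ x ∈ fr.En (ns k), ψ x = c k * g k x := by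
    intro k x hx
    have h0 : ∀ j, j ≠ k →
        Set.indicator (fr.En (ns j)) (fun y => c j * g j y) x = 0 := by
      intro j hj
      refine Set.indicator_of_notMem ?_ _
      have hd := fr.disjEn (ns j) (ns k) (fun h => hj (hmono.injective h))
      exact fun hxj => (Set.disjoint_left.mp hd hxj) hx
    calc ψ x = ∑' j, Set.indicator (fr.En (ns j)) (fun y => c j * g j y) x := rfl
    _ = Set.indicator (fr.En (ns k)) (fun y => c k * g k y) x := tsum_eq_single k h0
    _ = c k * g k x := Set.indicator_of_mem hx _
  have hψ_off : ∀ x, (∀ k, x ∉ fr.En (ns k)) → ψ x = 0 := by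
    intro x hx
    calc ψ x = ∑' j, Set.indicator (fr.En (ns j)) (fun y => c j * g j y) x := rfl
    _ = ∑' j, (0 : ℝ) := tsum_congr (fun j => Set.indicator_of_notMem (hx j) _)
    _ = 0 := tsum_zero
  have hsum : ∀ x, HasSum
      (fun k => Set.indicator (fr.En (ns k)) (fun y => c k * g k y) x) (ψ x) := by
    intro x
    rcases Classical.em (∃ k, x ∈ fr.En (ns k)) with hx | hx
    · obtain ⟨k, hk⟩ := hx
      have h0 : ∀ j, j ≠ k →
          Set.indicator (fr.En (ns j)) (fun y => c j * g j y) x = 0 := by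
        intro j hj
        refine Set.indicator_of_notMem ?_ _
        have hd := fr.disjEn (ns j) (ns k) (fun h => hj (hmono.injective h))
        exact fun hxj => (Set.disjoint_left.mp hd hxj) hk
      have := hasSum_single (f := fun j =>
        Set.indicator (fr.En (ns j)) (fun y => c j * g j y) x) k h0
      have h3 : (fun j => Set.indicator (fr.En (ns j)) (fun y => c j * g j y) x) k
          = c k * g k x := Set.indicator_of_mem hk _
      rw [hψ_on k x hk, ← h3]
      exact this
    · push_neg at hx
      have h0 : (fun k => Set.indicator (fr.En (ns k)) (fun y => c k * g k y) x)
          = fun _ => (0 : ℝ) := funext fun k => Set.indicator_of_notMem (hx k) _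
      rw [hψ_off x hx, h0]
      exact hasSum_zero
  have hψmeas : Measurable ψ := by
    refine measurable_of_tendsto_metrizable' atTop
      (f := fun K x => ∑ k ∈ Finset.range K,
        Set.indicator (fr.En (ns k)) (fun y => c k * g k y) x)
      (fun K => Finset.measurable_sum _ fun k _ => hterm_meas k) ?_
    rw [tendsto_pi_nhds]
    exact fun x => (hsum x).tendsto_sum_nat
  -- a.e. identification of ψ on each block
  have hae : ∀ k, ψ =ᵐ[fr.ν (ns k)] fun x => c k * g k x := by
    intro k
    have h0 : fr.En (ns k) ∈ ae (fr.ν (ns k)) := by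
      rw [mem_ae_iff]; exact fr.nullEn (ns k)
    exact Filter.Eventually.mono h0 (hψ_on k)
  have hae0 : ∀ m, (∀ k, ns k ≠ m) → ψ =ᵐ[fr.ν m] fun _ => (0 : ℝ) := by
    intro m hm
    have h0 : fr.En m ∈ ae (fr.ν m) := by
      rw [mem_ae_iff]; exact fr.nullEn m
    refine Filter.Eventually.mono h0 (fun x hx => ?_)
    refine hψ_off x (fun k hxk => ?_)
    have hd := fr.disjEn (ns k) m (hm k)
    exact (Set.disjoint_left.mp hd hxk) hx
  -- ψ is in every L²
  have hψL2 : ∀ m, MemLp ψ 2 (fr.ν m) := by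
    intro m
    rcases Classical.em (∃ k, ns k = m) with hm | hm
    · obtain ⟨k, rfl⟩ := hm
      exact ((fr.F_memL2 (g k) (hgF k) (ns k)).const_mul (c k)).ae_eq (hae k).symm
    · push_neg at hm
      exact MemLp.ae_eq (f := fun _ => (0:ℝ)) (hae0 m hm).symm MemLp.zero'
  -- the norms of ψ
  have hipψψ : ∀ k, ip (fr.ν (ns k)) ψ ψ = 1 / s k := by
    intro k
    rw [ip_congr_left (hae k), ip_congr_right (hae k),
      ip_const_mul_left, ip_comm, ip_const_mul_left]
    have h1 : ip (fr.ν (ns k)) (g k) (g k) = r (ns k) := by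
      show _ = ip (fr.ν (ns k)) (φs (ns k)) (φs (ns k))
      rw [ip_congr_left (hgae k).symm, ip_congr_right (hgae k).symm]
    rw [ip_comm, h1]
    show c k * (c k * r (ns k)) = _
    rw [← hs_sq k]
    show (1 / (s k * Real.sqrt (s k))) * ((1 / (s k * Real.sqrt (s k))) * s k ^ 2) = _
    have h2 : Real.sqrt (s k) * Real.sqrt (s k) = s k :=
      Real.mul_self_sqrt (hspos k).le
    have hsne : s k ≠ 0 := (hspos k).ne'
    have hrne : Real.sqrt (s k) ≠ 0 := (Real.sqrt_pos.mpr (hspos k)).ne'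
    field_simp
    nlinarith [h2]
  have hipψψ0 : ∀ m, (∀ k, ns k ≠ m) → ip (fr.ν m) ψ ψ = 0 := by
    intro m hm
    rw [ip_congr_left (hae0 m hm)]
    simp [ip]
  -- ⟨ψ,ψ⟩ₘ → 0
  have hψnorm_t : Tendsto (fun m => ip (fr.ν m) ψ ψ) atTop (𝓝 0) := by
    rw [Metric.tendsto_nhds]
    intro ε hε
    obtain ⟨K₀, hK₀⟩ := exists_nat_gt (1 / ε ^ 2)
    set K := K₀ + 1 with hK
    have hKpos : 1 ≤ K := Nat.le_add_left 1 K₀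
    have hsK : 1 / ε < Real.sqrt K := by
      have h0 : (1 / ε) ^ 2 < (K₀ : ℝ) := by
        have he : (1 / ε) ^ 2 = 1 / ε ^ 2 := by ring
        rw [he]; exact hK₀
      have h1 : 1 / ε < Real.sqrt K₀ := (Real.lt_sqrt (by positivity)).mpr h0
      refine lt_of_lt_of_le h1 (Real.sqrt_le_sqrt ?_)
      exact_mod_cast Nat.le_succ K₀
    filter_upwards [eventually_ge_atTop (ns K)] with m hm
    rw [Real.dist_eq]
    rcases Classical.em (∃ k, ns k = m) with hex | hex
    · obtain ⟨k, rfl⟩ := hex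
      have hkK : K ≤ k := (hmono.le_iff_le).mp hm
      have hsk : 1 / ε < s k := by
        refine lt_of_lt_of_le hsK (le_trans ?_ (hs_ge k))
        exact Real.sqrt_le_sqrt (by exact_mod_cast hkK)
      rw [hipψψ k, sub_zero, abs_of_pos (one_div_pos.mpr (hspos k))]
      rw [div_lt_iff₀ (hspos k)]
      rw [div_lt_iff₀ hε] at hsk
      linarith
    · push_neg at hex
      rw [hipψψ0 _ hex, sub_zero, abs_zero]
      exact hε
  have hipψψ_zero : ip (fr.ν 0) ψ ψ = 0 :=
    hipψψ0 0 (fun k => Nat.one_le_iff_ne_zero.mp (hns1 k))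
  -- ψ ∈ 𝓒
  obtain ⟨g₀, hg₀F, -⟩ := fr.F_dense (fun _ => 0) measurable_const
    (MemLp.zero' (ε := ℝ)) 1 one_pos
  have hψC : ψ ∈ fr.C := by
    refine ⟨⟨hψmeas, hψL2, ?_⟩, ?_, ?_⟩
    · rw [hipψψ_zero]; exact hψnorm_t
    · -- (c1)
      intro m hm
      rcases Classical.em (∃ k, ns k = m) with hex | hex
      · obtain ⟨k, rfl⟩ := hex
        refine ⟨fun x => c k * g k x + 0 * g k x,
          fr.F_linear (g k) (hgF k) (g k) (hgF k) (c k) 0, ?_⟩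
        refine (hae k).trans (ae_of_all _ fun x => by ring)
      · push_neg at hex
        refine ⟨fun x => 0 * g₀ x + 0 * g₀ x,
          fr.F_linear g₀ hg₀F g₀ hg₀F 0 0, ?_⟩
        refine (hae0 m hex).trans (ae_of_all _ fun x => by ring)
    · -- (c2)
      intro χ hχ
      have hχL2 := fr.F_memL2 χ hχ
      have hψχ0 : ip (fr.ν 0) ψ χ = 0 := by
        rw [ip_congr_left (hae0 0 (fun k => Nat.one_le_iff_ne_zero.mp (hns1 k)))]
        simp [ip]
      rw [hψχ0]
      -- bound on the χ norms
      obtain ⟨Bχ, hBχmem⟩ := (fr.F_tendsto χ hχ).sqrt.bddAbove_range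
      have hBχ : ∀ m, Real.sqrt (ip (fr.ν m) χ χ) ≤ Bχ := fun m => hBχmem ⟨m, rfl⟩
      refine squeeze_zero_norm (a := fun m => Real.sqrt (ip (fr.ν m) ψ ψ) * Bχ)
        (fun m => ?_) ?_
      · rw [Real.norm_eq_abs]
        refine le_trans (abs_ip_le (hψL2 m) (hχL2 m)) ?_
        exact mul_le_mul_of_nonneg_left (hBχ m) (Real.sqrt_nonneg _)
      · have := (hψnorm_t.sqrt).mul_const Bχ
        rwa [Real.sqrt_zero, zero_mul] at this
  -- the contradiction
  have hcontr := hw ψ hψC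
  have hφψ0 : ip (fr.ν 0) φ ψ = 0 := by
    rw [ip_congr_right (hae0 0 (fun k => Nat.one_le_iff_ne_zero.mp (hns1 k)))]
    simp [ip]
  rw [hφψ0] at hcontr
  have hsub : Tendsto (fun k => ip (fr.ν (ns k)) (φs (ns k)) ψ) atTop (𝓝 0) :=
    hcontr.comp hmono.tendsto_atTop
  have hval : ∀ k, 1 ≤ k → 1 ≤ ip (fr.ν (ns k)) (φs (ns k)) ψ := by
    intro k hk
    have h1 : ip (fr.ν (ns k)) (φs (ns k)) ψ = c k * r (ns k) := by
      rw [ip_congr_right (hae k), ip_comm, ip_const_mul_left,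
        ip_comm (fr.ν (ns k)) (g k) (φs (ns k)), ip_congr_right (hgae k).symm]
    rw [h1, ← hs_sq k]
    show 1 ≤ (1 / (s k * Real.sqrt (s k))) * s k ^ 2
    have hsk1 := hs1 k hk
    have h2 : Real.sqrt (s k) * Real.sqrt (s k) = s k :=
      Real.mul_self_sqrt (hspos k).le
    have h3 : Real.sqrt (s k) ≤ s k := by
      nlinarith [Real.sqrt_nonneg (s k)]
    have h4 : 0 < Real.sqrt (s k) := Real.sqrt_pos.mpr (hspos k)
    rw [← sub_nonneg]
    have h5 : 1 / (s k * Real.sqrt (s k)) * s k ^ 2 - 1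
        = (s k ^ 2 - s k * Real.sqrt (s k)) / (s k * Real.sqrt (s k)) := by
      field_simp
    rw [h5]
    apply div_nonneg
    · nlinarith [hspos k]
    · positivity
  have := hsub.eventually_lt_const (show (0:ℝ) < 1 by norm_num)
  rw [eventually_atTop] at this
  obtain ⟨N, hN⟩ := this
  have hval' := hval (max N 1) (le_max_right _ _)
  exact absurd (hN (max N 1) (le_max_left _ _)) (not_lt.2 hval')

/-- Proposition 2.3 (d): if `φs n ∈ 𝓒` `w`-converges to `φ ∈ 𝓒`, `ψs n ∈ 𝓒`
`w`-converges to `ψ ∈ 𝓒`, and `⟨φs n - φ, ψs n - ψ⟩ₙ ≥ 0` for all `n`, then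
`liminf_n ⟨φs n, ψs n⟩ₙ ≥ ⟨φ, ψ⟩`. -/
theorem le_liminf_ip (fr : Frame E) (φs ψs : ℕ → E → ℝ)
    (hφs : ∀ n, φs n ∈ fr.C) (hψs : ∀ n, ψs n ∈ fr.C)
    {φ ψ : E → ℝ} (hφ : φ ∈ fr.C) (hψ : ψ ∈ fr.C)
    (hwφ : fr.WConv φs φ) (hwψ : fr.WConv ψs ψ)
    (hpos : ∀ n, 0 ≤ ip (fr.ν n) (fun x => φs n x - φ x) (fun x => ψs n x - ψ x)) :
    ip (fr.ν 0) φ ψ ≤ liminf (fun n => ip (fr.ν n) (φs n) (ψs n)) atTop := by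
  obtain ⟨Mφ, hMφ⟩ := fr.bounded_of_wconv φs hφs hwφ
  obtain ⟨Mψ, hMψ⟩ := fr.bounded_of_wconv ψs hψs hwψ
  have hφsL2 : ∀ n, MemLp (φs n) 2 (fr.ν n) := fun n => (hφs n).1.2.1 n
  have hψsL2 : ∀ n, MemLp (ψs n) 2 (fr.ν n) := fun n => (hψs n).1.2.1 n
  have hφL2 : ∀ n, MemLp φ 2 (fr.ν n) := hφ.1.2.1
  have hψL2 : ∀ n, MemLp ψ 2 (fr.ν n) := hψ.1.2.1
  -- the lower bound sequence
  have hineq : ∀ n, ip (fr.ν n) (φs n) ψ + ip (fr.ν n) φ (ψs n) - ip (fr.ν n) φ ψ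
      ≤ ip (fr.ν n) (φs n) (ψs n) := by
    intro n
    have h := hpos n
    rw [ip_sub_sub (hφsL2 n) (hφL2 n) (hψsL2 n) (hψL2 n)] at h
    linarith
  -- the lower bound sequence converges to ⟨φ, ψ⟩
  have t1 := hwφ ψ hψ
  have t2 : Tendsto (fun n => ip (fr.ν n) φ (ψs n)) atTop (𝓝 (ip (fr.ν 0) φ ψ)) := by
    have h := hwψ φ hφ
    have he : (fun n => ip (fr.ν n) φ (ψs n)) = fun n => ip (fr.ν n) (ψs n) φ := by
      funext n; exact ip_comm _ _ _
    rw [he, ip_comm (fr.ν 0) φ ψ]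
    exact h
  have t3 := fr.C_ip_tendsto hφ hψ
  have ha : Tendsto (fun n => ip (fr.ν n) (φs n) ψ + ip (fr.ν n) φ (ψs n)
      - ip (fr.ν n) φ ψ) atTop (𝓝 (ip (fr.ν 0) φ ψ)) := by
    have h := (t1.add t2).sub t3
    have he : ip (fr.ν 0) φ ψ + ip (fr.ν 0) φ ψ - ip (fr.ν 0) φ ψ = ip (fr.ν 0) φ ψ := by
      ring
    rwa [he] at h
  -- the norms are uniformly bounded, hence the sequence is cobounded
  have hub : ∀ n, ip (fr.ν n) (φs n) (ψs n) ≤ Real.sqrt Mφ * Real.sqrt Mψ := by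
    intro n
    refine le_trans (le_abs_self _) (le_trans (abs_ip_le (hφsL2 n) (hψsL2 n)) ?_)
    exact mul_le_mul (Real.sqrt_le_sqrt (hMφ n)) (Real.sqrt_le_sqrt (hMψ n))
      (Real.sqrt_nonneg _) (Real.sqrt_nonneg _)
  have hcob : IsCoboundedUnder (· ≥ ·) atTop (fun n => ip (fr.ν n) (φs n) (ψs n)) :=
    isCoboundedUnder_ge_of_le atTop hub
  calc ip (fr.ν 0) φ ψ
      = liminf (fun n => ip (fr.ν n) (φs n) ψ + ip (fr.ν n) φ (ψs n)
          - ip (fr.ν n) φ ψ) atTop := ha.liminf_eq.symm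
    _ ≤ liminf (fun n => ip (fr.ν n) (φs n) (ψs n)) atTop :=
        liminf_le_liminf (Eventually.of_forall hineq) ha.isBoundedUnder_ge hcob


end Mosco
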